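/- Let D ≥ 1 be an integer, E = ℂ^D, and let R_B ⊂ E^{⊗3} be the linear span of {[[x,y]_⊗, z]_⊗ : x, y, z ∈ E}. Then inside E^{⊗5} one has (R_B⊗E⊗E) ∩ (E⊗R_B⊗E) ∩ (E⊗E⊗R_B) = 0; equivalently, the degree-5 homogeneous component of the dual cubic algebra B^! vanishes (and hence all components of degree ≥ 5 vanish). -/

import Mathlib

set_option maxSynthPendingDepth 5

open TensorProduct

/-- The relation space `R_B ⊂ (ℂ^D)^{⊗3}` of the parafermionic algebra: the linear span of the
elements `[[x,y]_⊗, z]_⊗ = x⊗y⊗z - y⊗x⊗z - z⊗x⊗y + z⊗y⊗x` for `x, y, z ∈ ℂ^D`. -/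
noncomputable def parafermionicRelations (D : ℕ) :
    Submodule ℂ ((Fin D → ℂ) ⊗[ℂ] ((Fin D → ℂ) ⊗[ℂ] (Fin D → ℂ))) :=
  Submodule.span ℂ
    {t | ∃ x y z : Fin D → ℂ,
      t = x ⊗ₜ[ℂ] (y ⊗ₜ[ℂ] z) - y ⊗ₜ[ℂ] (x ⊗ₜ[ℂ] z)
          - z ⊗ₜ[ℂ] (x ⊗ₜ[ℂ] y) + z ⊗ₜ[ℂ] (y ⊗ₜ[ℂ] x)}

section Embeddings

variable (E : Type*) [AddCommGroup E] [Module ℂ E]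

/-- Reassociation `E^{⊗3} ⊗ E^{⊗2} ≃ E^{⊗5}`. -/
noncomputable def assocFive :
    ((E ⊗[ℂ] (E ⊗[ℂ] E)) ⊗[ℂ] (E ⊗[ℂ] E)) ≃ₗ[ℂ]
      E ⊗[ℂ] (E ⊗[ℂ] (E ⊗[ℂ] (E ⊗[ℂ] E))) :=
  (TensorProduct.assoc ℂ E (E ⊗[ℂ] E) (E ⊗[ℂ] E)).trans
    (TensorProduct.congr (LinearEquiv.refl ℂ E) (TensorProduct.assoc ℂ E E (E ⊗[ℂ] E)))

/-- Reassociation `E^{⊗3} ⊗ E ≃ E^{⊗4}`. -/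
noncomputable def assocFour :
    ((E ⊗[ℂ] (E ⊗[ℂ] E)) ⊗[ℂ] E) ≃ₗ[ℂ] E ⊗[ℂ] (E ⊗[ℂ] (E ⊗[ℂ] E)) :=
  (TensorProduct.assoc ℂ E (E ⊗[ℂ] E) E).trans
    (TensorProduct.congr (LinearEquiv.refl ℂ E) (TensorProduct.assoc ℂ E E E))

variable {E}

/-- The subspace `R ⊗ E ⊗ E` of `E^{⊗5}` determined by a subspace `R ⊆ E^{⊗3}`. -/
noncomputable def subREE (R : Submodule ℂ (E ⊗[ℂ] (E ⊗[ℂ] E))) :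
    Submodule ℂ (E ⊗[ℂ] (E ⊗[ℂ] (E ⊗[ℂ] (E ⊗[ℂ] E)))) :=
  Submodule.map (assocFive E).toLinearMap
    (LinearMap.range (TensorProduct.map R.subtype (LinearMap.id (M := E ⊗[ℂ] E))))

/-- The subspace `R ⊗ E` of `E^{⊗4}` determined by a subspace `R ⊆ E^{⊗3}`. -/
noncomputable def subRE (R : Submodule ℂ (E ⊗[ℂ] (E ⊗[ℂ] E))) :
    Submodule ℂ (E ⊗[ℂ] (E ⊗[ℂ] (E ⊗[ℂ] E))) :=
  Submodule.map (assocFour E).toLinearMap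
    (LinearMap.range (TensorProduct.map R.subtype (LinearMap.id (M := E))))

/-- The subspace `E ⊗ p` of `E ⊗ M` determined by a subspace `p ⊆ M`. -/
noncomputable def subEl {M : Type*} [AddCommMonoid M] [Module ℂ M] (p : Submodule ℂ M) :
    Submodule ℂ (E ⊗[ℂ] M) :=
  LinearMap.range (p.subtype.lTensor E)

/-- The subspace `E ⊗ R ⊗ E` of `E^{⊗5}`. -/
noncomputable def subERE (R : Submodule ℂ (E ⊗[ℂ] (E ⊗[ℂ] E))) :
    Submodule ℂ (E ⊗[ℂ] (E ⊗[ℂ] (E ⊗[ℂ] (E ⊗[ℂ] E)))) :=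
  subEl (subRE R)

/-- The subspace `E ⊗ E ⊗ R` of `E^{⊗5}`. -/
noncomputable def subEER (R : Submodule ℂ (E ⊗[ℂ] (E ⊗[ℂ] E))) :
    Submodule ℂ (E ⊗[ℂ] (E ⊗[ℂ] (E ⊗[ℂ] (E ⊗[ℂ] E)))) :=
  subEl (subEl R)

end Embeddings
open TensorProduct
set_option synthInstance.maxHeartbeats 1000000
set_option maxHeartbeats 1000000
noncomputable section
namespace Para
variable (D : ℕ)
abbrev E' := Fin D → ℂ
def bD : Module.Basis (Fin D) ℂ (E' D) := Pi.basisFun ℂ (Fin D)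
def B2 : Module.Basis (Fin D × Fin D) ℂ (E' D ⊗[ℂ] E' D) := (bD D).tensorProduct (bD D)
def B3 : Module.Basis (Fin D × (Fin D × Fin D)) ℂ (E' D ⊗[ℂ] (E' D ⊗[ℂ] E' D)) :=
  (bD D).tensorProduct (B2 D)
def B4 := (bD D).tensorProduct (B3 D)
def B5 := (bD D).tensorProduct (B4 D)

variable {D}

lemma lemA {r} (hr : r ∈ parafermionicRelations D) (a b c : Fin D) :
    2 * (B3 D).repr r (a,(b,c)) + (B3 D).repr r (b,(a,c)) + (B3 D).repr r (b,(c,a))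
      - (B3 D).repr r (c,(b,a)) = 0 := by
  induction hr using Submodule.span_induction with
  | mem t ht =>
      obtain ⟨x, y, z, rfl⟩ := ht
      simp only [B3, B2, bD, map_sub, map_add, Finsupp.sub_apply, Finsupp.add_apply,
        Module.Basis.tensorProduct_repr_tmul_apply, Pi.basisFun_repr, smul_eq_mul]
      ring
  | zero => simp
  | add u v _ _ ihu ihv =>
      simp only [map_add, Finsupp.add_apply]
      linear_combination ihu + ihv
  | smul c u _ ihu =>
      simp only [map_smul, Finsupp.smul_apply, smul_eq_mul]
      linear_combination c * ihu

variable {M N : Type*} [AddCommMonoid M] [Module ℂ M]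

def ctr [AddCommGroup N] [Module ℂ N] (ℓ : N →ₗ[ℂ] ℂ) : N ⊗[ℂ] M →ₗ[ℂ] M :=
  (TensorProduct.lid ℂ M).toLinearMap ∘ₗ ℓ.rTensor M

@[simp] lemma ctr_tmul [AddCommGroup N] [Module ℂ N] (ℓ : N →ₗ[ℂ] ℂ) (x : N) (m : M) :
    ctr ℓ (x ⊗ₜ m) = ℓ x • m := by
  simp [ctr]

lemma ctr_mem [AddCommGroup N] [Module ℂ N] (p : Submodule ℂ M) (ℓ : N →ₗ[ℂ] ℂ)
    {t : N ⊗[ℂ] M} (ht : t ∈ subEl p) : ctr ℓ t ∈ p := by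
  obtain ⟨u, rfl⟩ := ht
  induction u using TensorProduct.induction_on with
  | zero => simp
  | tmul x m =>
      rw [LinearMap.lTensor_tmul, ctr_tmul]
      exact p.smul_mem _ m.2
  | add u v ihu ihv => rw [map_add, map_add]; exact p.add_mem ihu ihv

lemma repr_ctr {ι : Type*} (β : Module.Basis ι ℂ M) (a : Fin D) (t : E' D ⊗[ℂ] M) (j : ι) :
    β.repr (ctr ((bD D).coord a) t) j = ((bD D).tensorProduct β).repr t (a, j) := by
  induction t using TensorProduct.induction_on with
  | zero => simp
  | tmul x m =>
      simp [Module.Basis.tensorProduct_repr_tmul_apply, Module.Basis.coord_apply]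
      ring
  | add u v ihu ihv =>
      simp only [map_add, Finsupp.add_apply]
      linear_combination ihu + ihv

lemma repr_assocFive (u : (E' D ⊗[ℂ] (E' D ⊗[ℂ] E' D)) ⊗[ℂ] (E' D ⊗[ℂ] E' D))
    (a b c d e : Fin D) :
    (B5 D).repr (assocFive (E' D) u) (a,(b,(c,(d,e)))) =
      ((B3 D).tensorProduct (B2 D)).repr u ((a,(b,c)),(d,e)) := by
  have h : (Finsupp.lapply (M := ℂ) (a,(b,(c,(d,e)))) ∘ₗ (B5 D).repr.toLinearMap ∘ₗ
        (assocFive (E' D)).toLinearMap) =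
      (Finsupp.lapply (M := ℂ) ((a,(b,c)),(d,e)) ∘ₗ
        ((B3 D).tensorProduct (B2 D)).repr.toLinearMap) := by
    apply Module.Basis.ext ((B3 D).tensorProduct (B2 D))
    rintro ⟨⟨i, j, k⟩, l, m⟩
    simp only [LinearMap.coe_comp, Function.comp_apply, LinearEquiv.coe_coe,
      Finsupp.lapply_apply, Module.Basis.tensorProduct_apply, Module.Basis.repr_self,
      Finsupp.single_apply, B5, B4, B3, B2, assocFive, LinearEquiv.trans_apply,
      TensorProduct.assoc_tmul, TensorProduct.congr_tmul, LinearEquiv.refl_apply,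
      Module.Basis.tensorProduct_repr_tmul_apply, Prod.mk.injEq]
    split_ifs <;> simp_all
  simpa using LinearMap.congr_fun h u

lemma repr_assocFour (u : (E' D ⊗[ℂ] (E' D ⊗[ℂ] E' D)) ⊗[ℂ] E' D)
    (a b c d : Fin D) :
    (B4 D).repr (assocFour (E' D) u) (a,(b,(c,d))) =
      ((B3 D).tensorProduct (bD D)).repr u ((a,(b,c)),d) := by
  have h : (Finsupp.lapply (M := ℂ) (a,(b,(c,d))) ∘ₗ (B4 D).repr.toLinearMap ∘ₗ
        (assocFour (E' D)).toLinearMap) =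
      (Finsupp.lapply (M := ℂ) ((a,(b,c)),d) ∘ₗ
        ((B3 D).tensorProduct (bD D)).repr.toLinearMap) := by
    apply Module.Basis.ext ((B3 D).tensorProduct (bD D))
    rintro ⟨⟨i, j, k⟩, l⟩
    simp only [LinearMap.coe_comp, Function.comp_apply, LinearEquiv.coe_coe,
      Finsupp.lapply_apply, Module.Basis.tensorProduct_apply, Module.Basis.repr_self,
      Finsupp.single_apply, B4, B3, B2, assocFour, LinearEquiv.trans_apply,
      TensorProduct.assoc_tmul, TensorProduct.congr_tmul, LinearEquiv.refl_apply,
      Module.Basis.tensorProduct_repr_tmul_apply, Prod.mk.injEq]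
    split_ifs <;> simp_all
  simpa using LinearMap.congr_fun h u
lemma B5_def : B5 D = (bD D).tensorProduct (B4 D) := rfl
lemma B4_def : B4 D = (bD D).tensorProduct (B3 D) := rfl

lemma memREE {t} (ht : t ∈ subREE (parafermionicRelations D)) (a b c d e : Fin D) :
    2 * (B5 D).repr t (a,(b,(c,(d,e)))) + (B5 D).repr t (b,(a,(c,(d,e))))
      + (B5 D).repr t (b,(c,(a,(d,e)))) - (B5 D).repr t (c,(b,(a,(d,e)))) = 0 := by
  obtain ⟨u, hu, rfl⟩ := ht
  obtain ⟨v, rfl⟩ := hu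
  simp only [LinearEquiv.coe_coe]
  rw [repr_assocFive, repr_assocFive, repr_assocFive, repr_assocFive]
  induction v using TensorProduct.induction_on with
  | zero => simp
  | tmul r w =>
      rw [TensorProduct.map_tmul]
      simp only [Module.Basis.tensorProduct_repr_tmul_apply, Submodule.coe_subtype,
        LinearMap.id_coe, id_eq, smul_eq_mul]
      linear_combination ((B2 D).repr w (d, e)) * lemA r.2 a b c
  | add u v ihu ihv =>
      simp only [map_add, Finsupp.add_apply]
      linear_combination ihu + ihv

lemma memRE {t} (ht : t ∈ subRE (parafermionicRelations D)) (a b c d : Fin D) :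
    2 * (B4 D).repr t (a,(b,(c,d))) + (B4 D).repr t (b,(a,(c,d)))
      + (B4 D).repr t (b,(c,(a,d))) - (B4 D).repr t (c,(b,(a,d))) = 0 := by
  obtain ⟨u, hu, rfl⟩ := ht
  obtain ⟨v, rfl⟩ := hu
  simp only [LinearEquiv.coe_coe]
  rw [repr_assocFour, repr_assocFour, repr_assocFour, repr_assocFour]
  induction v using TensorProduct.induction_on with
  | zero => simp
  | tmul r w =>
      rw [TensorProduct.map_tmul]
      simp only [Module.Basis.tensorProduct_repr_tmul_apply, Submodule.coe_subtype,
        LinearMap.id_coe, id_eq, smul_eq_mul]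
      linear_combination ((bD D).repr w d) * lemA r.2 a b c
  | add u v ihu ihv =>
      simp only [map_add, Finsupp.add_apply]
      linear_combination ihu + ihv

lemma key {I : Type*} (f : I → I → I → I → I → ℂ)
    (h1 : ∀ a b c d e : I, 2 * f a b c d e + f b a c d e + f b c a d e - f c b a d e = 0)
    (h2 : ∀ a b c d e : I, 2 * f a b c d e + f a c b d e + f a c d b e - f a d c b e = 0)
    (h3 : ∀ a b c d e : I, 2 * f a b c d e + f a b d c e + f a b d e c - f a b e d c = 0)
    (a b c d e : I) : f a b c d e = 0 := by
  linear_combination (2/9 : ℂ) * h1 a b c e d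
    + (-1/9 : ℂ) * h1 a b d e c
    + (1/9 : ℂ) * h1 a b e c d
    + (1/9 : ℂ) * h1 a b e d c
    + (2/9 : ℂ) * h1 a c b e d
    + (-1/9 : ℂ) * h1 a d b e c
    + (1/9 : ℂ) * h1 a e b c d
    + (1/9 : ℂ) * h1 a e b d c
    + (2/9 : ℂ) * h1 b a c e d
    + (-1/9 : ℂ) * h1 b a d e c
    + (1/9 : ℂ) * h1 b a e c d
    + (1/9 : ℂ) * h1 b a e d c
    + (-4/9 : ℂ) * h2 a b c e d
    + (-1/9 : ℂ) * h2 a b d e c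
    + (-4/9 : ℂ) * h2 a b e c d
    + (-1/9 : ℂ) * h2 a b e d c
    + (-1/9 : ℂ) * h2 a c b e d
    + (2/9 : ℂ) * h2 a d b e c
    + (2/3 : ℂ) * h3 a b c d e
    + (1/3 : ℂ) * h3 a b c e d
    + (-1/3 : ℂ) * h3 a b d c e
    + (-1/3 : ℂ) * h3 b a c e d

end Para

/-- Inside `(ℂ^D)^{⊗5}` one has `(R_B⊗E⊗E) ∩ (E⊗R_B⊗E) ∩ (E⊗E⊗R_B) = 0`:
the degree-5 component of the dual cubic algebra `B^!` of the parafermionic algebra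
vanishes (and hence all components of degree ≥ 5 vanish). -/
theorem parafermionic_dual_degree_five_vanishes (D : ℕ) (hD : 1 ≤ D) :
    subREE (parafermionicRelations D) ⊓ subERE (parafermionicRelations D) ⊓
        subEER (parafermionicRelations D) = ⊥ := by
  rw [eq_bot_iff]
  rintro t ⟨⟨ht1, ht2⟩, ht3⟩
  rw [Submodule.mem_bot]
  have key0 : ∀ a b c d e : Fin D, (Para.B5 D).repr t (a,(b,(c,(d,e)))) = 0 := by
    apply Para.key (fun a b c d e => (Para.B5 D).repr t (a,(b,(c,(d,e)))))
    · exact fun a b c d e => Para.memREE ht1 a b c d e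
    · intro a b c d e
      have hs : Para.ctr ((Para.bD D).coord a) t ∈ subRE (parafermionicRelations D) :=
        Para.ctr_mem _ _ ht2
      have h := Para.memRE hs b c d e
      rw [Para.repr_ctr, Para.repr_ctr, Para.repr_ctr, Para.repr_ctr, ← Para.B5_def] at h
      exact h
    · intro a b c d e
      have hs1 : Para.ctr ((Para.bD D).coord a) t ∈ subEl (parafermionicRelations D) :=
        Para.ctr_mem _ _ ht3
      have hs2 : Para.ctr ((Para.bD D).coord b) (Para.ctr ((Para.bD D).coord a) t)
          ∈ parafermionicRelations D := Para.ctr_mem _ _ hs1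
      have h := Para.lemA hs2 c d e
      rw [Para.repr_ctr, Para.repr_ctr, Para.repr_ctr, Para.repr_ctr, ← Para.B4_def] at h
      rw [Para.repr_ctr, Para.repr_ctr, Para.repr_ctr, Para.repr_ctr, ← Para.B5_def] at h
      exact h
  have hz : (Para.B5 D).repr t = 0 := by
    ext ⟨a, b, c, d, e⟩
    simpa using key0 a b c d e
  exact ((Para.B5 D).repr.map_eq_zero_iff).mp hz
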